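/- For all nonnegative integers p and k, the super Catalan number S(p,k) := C(2p,p) * C(2k,k) / C(p+k,p) is an integer (i.e., C(p+k,p) divides C(2p,p) * C(2k,k)). -/
import Mathlib

/-- The super Catalan number `S(p,k) = C(2p,p)·C(2k,k)/C(p+k,p)` is an integer. -/
theorem superCatalan_integer (p k : ℕ) :
    (p + k).choose p ∣ (2 * p).choose p * (2 * k).choose k := by
  have h1 : (0:ℕ) < (p + k).choose p := Nat.choose_pos (Nat.le_add_right p k)
  have h2 : (0:ℕ) < (2 * p).choose p := Nat.choose_pos (by omega)
  have h3 : (0:ℕ) < (2 * k).choose k := Nat.choose_pos (by omega)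
  rw [← Nat.factorization_le_iff_dvd h1.ne' (by positivity)]
  intro q
  by_cases hq : q.Prime
  · haveI : Fact q.Prime := ⟨hq⟩
    have hb : Nat.log q (2 * (p + k)) < Nat.log q (2 * (p + k)) + 1 := Nat.lt_succ_self _
    set b := Nat.log q (2 * (p + k)) + 1 with hbdef
    have e1 : ((p + k).choose p).factorization q =
        ((Finset.Ico 1 b).filter fun i => q ^ i ≤ p % q ^ i + k % q ^ i).card := by
      rw [Nat.factorization_def _ hq, add_comm p k,
        padicValNat_choose' (lt_of_le_of_lt (Nat.log_mono_right (by omega)) hb)]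
    have e2 : ((2 * p).choose p).factorization q =
        ((Finset.Ico 1 b).filter fun i => q ^ i ≤ p % q ^ i + p % q ^ i).card := by
      rw [Nat.factorization_def _ hq, two_mul,
        padicValNat_choose' (lt_of_le_of_lt (Nat.log_mono_right (by omega)) hb)]
    have e3 : ((2 * k).choose k).factorization q =
        ((Finset.Ico 1 b).filter fun i => q ^ i ≤ k % q ^ i + k % q ^ i).card := by
      rw [Nat.factorization_def _ hq, two_mul,
        padicValNat_choose' (lt_of_le_of_lt (Nat.log_mono_right (by omega)) hb)]
    rw [Nat.factorization_mul h2.ne' h3.ne', Finsupp.add_apply, e1, e2, e3]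
    calc ((Finset.Ico 1 b).filter fun i => q ^ i ≤ p % q ^ i + k % q ^ i).card
        ≤ (((Finset.Ico 1 b).filter fun i => q ^ i ≤ p % q ^ i + p % q ^ i) ∪
           ((Finset.Ico 1 b).filter fun i => q ^ i ≤ k % q ^ i + k % q ^ i)).card := by
          apply Finset.card_le_card
          intro i hi
          simp only [Finset.mem_filter, Finset.mem_union] at hi ⊢
          obtain ⟨hmem, hle⟩ := hi
          rcases le_total (p % q ^ i) (k % q ^ i) with h | h
          · exact Or.inr ⟨hmem, by omega⟩
          · exact Or.inl ⟨hmem, by omega⟩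
      _ ≤ _ := Finset.card_union_le _ _
  · simp [Nat.factorization_eq_zero_of_not_prime _ hq]
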